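/- Let ℓ₀, ℓ₁ ∈ B_c(Y). For every λ ∈ ℝ the function (y, y', s, s') ↦ ℓ₀(y, y', s − s')·ℓ₁(y', y, s' − s)·(χ^λ(s') − χ^λ(s)) is integrable on Y × Y × ℝ × ℝ, and σ₁^λ(ℓ₀, ℓ₁) = σ₁⁰(ℓ₀, ℓ₁) for every λ ∈ ℝ; that is, Roe's functional σ₁^λ is well defined and its value is independent of λ. -/

import Mathlib

open MeasureTheory

noncomputable section

/-- The indicator function of `(-∞, -λ] ⊆ ℝ`, complex-valued. -/
def chi (l : ℝ) (s : ℝ) : ℂ := if s ≤ -l then 1 else 0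

/-- `ℓ` belongs to `B_c(Y)`: it is continuous and supported in `Y × Y × [-R, R]`
for some `R > 0`. -/
def MemBc {Y : Type*} [TopologicalSpace Y] (ℓ : Y → Y → ℝ → ℂ) : Prop :=
  Continuous (fun q : Y × Y × ℝ => ℓ q.1 q.2.1 q.2.2) ∧
    ∃ R > (0 : ℝ), ∀ y y' t, t ∉ Set.Icc (-R) R → ℓ y y' t = 0

/-- Roe's functional `σ₁^λ` in kernel form. -/
def sigma1 {Y : Type*} [MeasurableSpace Y] (μ : Measure Y) (l : ℝ)
    (ℓ₀ ℓ₁ : Y → Y → ℝ → ℂ) : ℂ :=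
  ∫ q : (Y × Y) × ℝ × ℝ,
    ℓ₀ q.1.1 q.1.2 (q.2.1 - q.2.2) * ℓ₁ q.1.2 q.1.1 (q.2.2 - q.2.1) *
      (chi l q.2.2 - chi l q.2.1) ∂((μ.prod μ).prod (volume.prod volume))

/-- for `ℓ₀, ℓ₁ ∈ B_c(Y)` and every `λ ∈ ℝ`, the integrand defining
`σ₁^λ(ℓ₀, ℓ₁)` is integrable on `Y × Y × ℝ × ℝ`, and `σ₁^λ(ℓ₀, ℓ₁) = σ₁⁰(ℓ₀, ℓ₁)`. -/
theorem sigma1_integrable_and_lambda_independent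
    {Y : Type*} [MetricSpace Y] [CompactSpace Y] [MeasurableSpace Y] [BorelSpace Y]
    (μ : Measure Y) [IsFiniteMeasure μ]
    (ℓ₀ ℓ₁ : Y → Y → ℝ → ℂ) (h₀ : MemBc ℓ₀) (h₁ : MemBc ℓ₁) (l : ℝ) :
    Integrable (fun q : (Y × Y) × ℝ × ℝ =>
        ℓ₀ q.1.1 q.1.2 (q.2.1 - q.2.2) * ℓ₁ q.1.2 q.1.1 (q.2.2 - q.2.1) *
          (chi l q.2.2 - chi l q.2.1))
      ((μ.prod μ).prod (volume.prod volume)) ∧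
    sigma1 μ l ℓ₀ ℓ₁ = sigma1 μ 0 ℓ₀ ℓ₁ := by
  obtain ⟨hc₀, R₀, hR₀, hs₀⟩ := h₀
  obtain ⟨hc₁, R₁, hR₁, hs₁⟩ := h₁
  set R : ℝ := max R₀ R₁ with hRdef
  -- boundedness of ℓ₀ and ℓ₁
  have hK : IsCompact ((Set.univ : Set Y) ×ˢ (Set.univ : Set Y) ×ˢ Set.Icc (-R) R) :=
    isCompact_univ.prod (isCompact_univ.prod isCompact_Icc)
  have hb₀ : ∃ C, ∀ p : Y × Y × ℝ, ‖ℓ₀ p.1 p.2.1 p.2.2‖ ≤ C := by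
    refine Continuous.bounded_above_of_compact_support hc₀ (HasCompactSupport.intro hK ?_)
    rintro ⟨y, y', t⟩ hp
    apply hs₀
    intro ht
    exact hp ⟨Set.mem_univ _, Set.mem_univ _,
      ⟨le_trans (neg_le_neg (le_max_left R₀ R₁)) ht.1, ht.2.trans (le_max_left R₀ R₁)⟩⟩
  have hb₁ : ∃ C, ∀ p : Y × Y × ℝ, ‖ℓ₁ p.1 p.2.1 p.2.2‖ ≤ C := by
    refine Continuous.bounded_above_of_compact_support hc₁ (HasCompactSupport.intro hK ?_)
    rintro ⟨y, y', t⟩ hp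
    apply hs₁
    intro ht
    exact hp ⟨Set.mem_univ _, Set.mem_univ _,
      ⟨le_trans (neg_le_neg (le_max_right R₀ R₁)) ht.1, ht.2.trans (le_max_right R₀ R₁)⟩⟩
  obtain ⟨C₀', hC₀'⟩ := hb₀
  obtain ⟨C₁', hC₁'⟩ := hb₁
  set C₀ : ℝ := max C₀' 0 with hC₀def
  set C₁ : ℝ := max C₁' 0 with hC₁def
  have hC₀ : ∀ p : Y × Y × ℝ, ‖ℓ₀ p.1 p.2.1 p.2.2‖ ≤ C₀ := fun p => (hC₀' p).trans (le_max_left _ _)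
  have hC₁ : ∀ p : Y × Y × ℝ, ‖ℓ₁ p.1 p.2.1 p.2.2‖ ≤ C₁ := fun p => (hC₁' p).trans (le_max_left _ _)
  have hC₀0 : 0 ≤ C₀ := le_max_right _ _
  have hC₁0 : 0 ≤ C₁ := le_max_right _ _
  -- measurability of chi
  have hchi_meas : ∀ a : ℝ, Measurable (chi a) := by
    intro a
    unfold chi
    exact Measurable.ite (measurableSet_le measurable_id measurable_const)
      measurable_const measurable_const
  have hchi_norm : ∀ a s : ℝ, ‖chi a s‖ ≤ 1 := by
    intro a s
    unfold chi
    split <;> simp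
  -- integrability of the λ-integrand, for any λ
  have hint : ∀ a : ℝ, Integrable (fun q : (Y × Y) × ℝ × ℝ =>
      ℓ₀ q.1.1 q.1.2 (q.2.1 - q.2.2) * ℓ₁ q.1.2 q.1.1 (q.2.2 - q.2.1) *
        (chi a q.2.2 - chi a q.2.1))
      ((μ.prod μ).prod (volume.prod volume)) := by
    intro a
    have hm₀ : Measurable (fun q : (Y × Y) × ℝ × ℝ => ℓ₀ q.1.1 q.1.2 (q.2.1 - q.2.2)) := by
      have : Continuous (fun q : (Y × Y) × ℝ × ℝ =>
          (q.1.1, q.1.2, q.2.1 - q.2.2) : ((Y × Y) × ℝ × ℝ) → Y × Y × ℝ) := by fun_prop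
      exact (hc₀.comp this).measurable
    have hm₁ : Measurable (fun q : (Y × Y) × ℝ × ℝ => ℓ₁ q.1.2 q.1.1 (q.2.2 - q.2.1)) := by
      have : Continuous (fun q : (Y × Y) × ℝ × ℝ =>
          (q.1.2, q.1.1, q.2.2 - q.2.1) : ((Y × Y) × ℝ × ℝ) → Y × Y × ℝ) := by fun_prop
      exact (hc₁.comp this).measurable
    have hmchi : Measurable (fun q : (Y × Y) × ℝ × ℝ => chi a q.2.2 - chi a q.2.1) :=
      ((hchi_meas a).comp (measurable_snd.snd)).sub ((hchi_meas a).comp (measurable_snd.fst))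
    have hmeas : AEStronglyMeasurable (fun q : (Y × Y) × ℝ × ℝ =>
        ℓ₀ q.1.1 q.1.2 (q.2.1 - q.2.2) * ℓ₁ q.1.2 q.1.1 (q.2.2 - q.2.1) *
          (chi a q.2.2 - chi a q.2.1)) ((μ.prod μ).prod (volume.prod volume)) :=
      ((hm₀.mul hm₁).mul hmchi).aestronglyMeasurable
    -- the dominating function
    set S : Set ((Y × Y) × ℝ × ℝ) :=
      (Set.univ : Set (Y × Y)) ×ˢ (Set.Icc (-a - R) (-a + R) ×ˢ Set.Icc (-a - R) (-a + R))
      with hSdef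
    have hSmeas : MeasurableSet S :=
      MeasurableSet.univ.prod (measurableSet_Icc.prod measurableSet_Icc)
    have hSfin : ((μ.prod μ).prod (volume.prod volume)) S < ⊤ := by
      rw [hSdef, Measure.prod_prod, Measure.prod_prod]
      exact ENNReal.mul_lt_top (measure_lt_top _ _)
        (ENNReal.mul_lt_top (measure_Icc_lt_top) (measure_Icc_lt_top))
    have hg : Integrable (S.indicator fun _ => (C₀ * C₁ * 2 : ℝ))
        ((μ.prod μ).prod (volume.prod volume)) := by
      rw [integrable_indicator_iff hSmeas]
      exact integrableOn_const hSfin.ne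
    refine hg.mono' hmeas ?_
    refine Filter.Eventually.of_forall ?_
    rintro ⟨⟨y, y'⟩, s, s'⟩
    by_cases hq : (⟨⟨y, y'⟩, s, s'⟩ : (Y × Y) × ℝ × ℝ) ∈ S
    · rw [Set.indicator_of_mem hq]
      calc ‖ℓ₀ y y' (s - s') * ℓ₁ y' y (s' - s) * (chi a s' - chi a s)‖
          = ‖ℓ₀ y y' (s - s')‖ * ‖ℓ₁ y' y (s' - s)‖ * ‖chi a s' - chi a s‖ := by
            rw [norm_mul, norm_mul]
        _ ≤ C₀ * C₁ * 2 := by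
            refine mul_le_mul (mul_le_mul (hC₀ ⟨y, y', s - s'⟩) (hC₁ ⟨y', y, s' - s⟩)
              (norm_nonneg _) hC₀0) ?_ (norm_nonneg _) (by positivity)
            calc ‖chi a s' - chi a s‖ ≤ ‖chi a s'‖ + ‖chi a s‖ := norm_sub_le _ _
              _ ≤ 1 + 1 := add_le_add (hchi_norm a s') (hchi_norm a s)
              _ = 2 := by norm_num
    · rw [Set.indicator_of_notMem hq]
      -- show the integrand vanishes off S
      have : ℓ₀ y y' (s - s') * ℓ₁ y' y (s' - s) * (chi a s' - chi a s) = 0 := by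
        by_contra hne
        have h0 : ℓ₀ y y' (s - s') ≠ 0 := fun h => hne (by rw [h]; ring)
        have hc : chi a s' - chi a s ≠ 0 := fun h => hne (by rw [h]; ring)
        have hst : s - s' ∈ Set.Icc (-R₀) R₀ := by
          by_contra hst; exact h0 (hs₀ y y' _ hst)
        have hst' : |s - s'| ≤ R := by
          rw [abs_le]
          exact ⟨le_trans (neg_le_neg (le_max_left R₀ R₁)) hst.1,
            hst.2.trans (le_max_left R₀ R₁)⟩
        have habs : |s - s'| ≤ R := hst'
        -- chi a s' ≠ chi a s forces s, s' to straddle -a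
        have hstraddle : (s' ≤ -a ∧ ¬ s ≤ -a) ∨ (s ≤ -a ∧ ¬ s' ≤ -a) := by
          unfold chi at hc
          by_cases h1 : s' ≤ -a <;> by_cases h2 : s ≤ -a <;> simp [h1, h2] at hc ⊢
        have hmem : s ∈ Set.Icc (-a - R) (-a + R) ∧ s' ∈ Set.Icc (-a - R) (-a + R) := by
          rw [abs_le] at habs
          rcases hstraddle with ⟨h1, h2⟩ | ⟨h1, h2⟩ <;>
            push_neg at h2 <;>
            exact ⟨⟨by linarith, by linarith⟩, ⟨by linarith, by linarith⟩⟩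
        exact hq ⟨Set.mem_univ _, hmem.1, hmem.2⟩
      rw [this, norm_zero]
  refine ⟨hint l, ?_⟩
  -- λ-independence via translation invariance
  have hmp : MeasurePreserving
      (fun q : (Y × Y) × ℝ × ℝ => ((q.1 : Y × Y), (q.2.1 + l, q.2.2 + l)))
      ((μ.prod μ).prod (volume.prod volume)) ((μ.prod μ).prod (volume.prod volume)) :=
    (MeasurePreserving.id _).prod
      ((measurePreserving_add_right volume l).prod (measurePreserving_add_right volume l))
  have hemb : MeasurableEmbedding
      (fun q : (Y × Y) × ℝ × ℝ => ((q.1 : Y × Y), (q.2.1 + l, q.2.2 + l))) := by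
    have : (fun q : (Y × Y) × ℝ × ℝ => ((q.1 : Y × Y), (q.2.1 + l, q.2.2 + l))) =
        ((MeasurableEquiv.refl (Y × Y)).prodCongr
          ((MeasurableEquiv.addRight l).prodCongr (MeasurableEquiv.addRight l))) := rfl
    rw [this]
    exact MeasurableEquiv.measurableEmbedding _
  have hkey := MeasurePreserving.integral_comp hmp hemb
    (fun q : (Y × Y) × ℝ × ℝ =>
      ℓ₀ q.1.1 q.1.2 (q.2.1 - q.2.2) * ℓ₁ q.1.2 q.1.1 (q.2.2 - q.2.1) *
        (chi 0 q.2.2 - chi 0 q.2.1))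
  unfold sigma1
  rw [← hkey]
  congr 1
  funext q
  have h1 : q.2.1 + l - (q.2.2 + l) = q.2.1 - q.2.2 := by ring
  have h2 : q.2.2 + l - (q.2.1 + l) = q.2.2 - q.2.1 := by ring
  have h3 : ∀ s : ℝ, chi 0 (s + l) = chi l s := by
    intro s
    unfold chi
    exact if_congr (by constructor <;> intro <;> linarith) rfl rfl
  simp only [h1, h2, h3]

end
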